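/- arXiv:0811.1748 — 4 statements merged into one kernel-verified Lean document; each statement's English description precedes it below -/
import Mathlib

section
/- Let K be a nonempty compact convex subset of ℝ³ contained in [0,∞)³, whose points are written μ = (μ⁻, μ⁰, μ⁺). Then inf_{λ>0} sup_{μ∈K} (λ·μ⁺ + μ⁰ + λ⁻¹·μ⁻) = sup_{μ∈K} inf_{λ>0} (λ·μ⁺ + μ⁰ + λ⁻¹·μ⁻) = sup_{μ∈K} (μ⁰ + 2·√(μ⁺·μ⁻)). -/
open Real

def Qf (y l : ℝ) (μ : ℝ × ℝ × ℝ) : ℝ := l * l * μ.2.2 + l * μ.2.1 + μ.1 - y * l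

lemma qconv {a b c y l1 l2 l : ℝ} (ha : 0 ≤ a)
    (h1 : l1 * l1 * a + l1 * b + c - y * l1 ≤ 0)
    (h2 : l2 * l2 * a + l2 * b + c - y * l2 ≤ 0)
    (hl1 : l1 ≤ l) (hl2 : l ≤ l2) : l * l * a + l * b + c - y * l ≤ 0 := by
  rcases eq_or_lt_of_le (hl1.trans hl2) with he | hlt
  · have : l = l1 := le_antisymm (he ▸ hl2) hl1
    subst this; exact h1
  · have e1 : (l2 - l) * (l1 * l1 * a + l1 * b + c - y * l1) ≤ 0 :=
      mul_nonpos_of_nonneg_of_nonpos (by linarith) h1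
    have e2 : (l - l1) * (l2 * l2 * a + l2 * b + c - y * l2) ≤ 0 :=
      mul_nonpos_of_nonneg_of_nonpos (by linarith) h2
    have e3 : 0 ≤ a * ((l - l1) * ((l2 - l) * (l2 - l1))) :=
      mul_nonneg ha (mul_nonneg (by linarith) (mul_nonneg (by linarith) (by linarith)))
    nlinarith [e1, e2, e3]

lemma Qf_conv {y l1 l2 l : ℝ} {μ : ℝ × ℝ × ℝ} (ha : 0 ≤ μ.2.2)
    (h1 : Qf y l1 μ ≤ 0) (h2 : Qf y l2 μ ≤ 0) (hl1 : l1 ≤ l) (hl2 : l ≤ l2) :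
    Qf y l μ ≤ 0 := qconv ha h1 h2 hl1 hl2

lemma Qf_affine (y l t : ℝ) (μ ν : ℝ × ℝ × ℝ) :
    Qf y l ((1 - t) • μ + t • ν) = (1 - t) * Qf y l μ + t * Qf y l ν := by
  simp only [Qf, Prod.fst_add, Prod.snd_add, Prod.smul_fst, Prod.smul_snd, smul_eq_mul]
  ring

lemma Qf_cont (y : ℝ) : Continuous (fun q : ℝ × (ℝ × ℝ × ℝ) => Qf y q.1 q.2) := by
  unfold Qf; fun_prop

lemma Qf_cont1 (y : ℝ) (μ : ℝ × ℝ × ℝ) : Continuous (fun l : ℝ => Qf y l μ) := by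
  unfold Qf; fun_prop

lemma amgm {l a c : ℝ} (hl : 0 < l) (ha : 0 ≤ a) (hc : 0 ≤ c) :
    2 * Real.sqrt (a * c) ≤ l * a + l⁻¹ * c := by
  have h1 : Real.sqrt (l * a) * Real.sqrt (l⁻¹ * c) = Real.sqrt (a * c) := by
    rw [← Real.sqrt_mul (by positivity)]
    congr 1
    field_simp
  have h2 := sq_nonneg (Real.sqrt (l * a) - Real.sqrt (l⁻¹ * c))
  have h3 : Real.sqrt (l * a) ^ 2 = l * a := Real.sq_sqrt (by positivity)
  have h4 : Real.sqrt (l⁻¹ * c) ^ 2 = l⁻¹ * c := Real.sq_sqrt (by positivity)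
  nlinarith [h1, h2, h3, h4]

lemma innerInf {a b c : ℝ} (ha : 0 ≤ a) (hb : 0 ≤ b) (hc : 0 ≤ c) :
    sInf {z : ℝ | ∃ l : ℝ, 0 < l ∧ z = l * a + b + l⁻¹ * c} = b + 2 * Real.sqrt (a * c) := by
  have hne : {z : ℝ | ∃ l : ℝ, 0 < l ∧ z = l * a + b + l⁻¹ * c}.Nonempty :=
    ⟨1 * a + b + 1⁻¹ * c, 1, one_pos, rfl⟩
  have hlb : ∀ z ∈ {z : ℝ | ∃ l : ℝ, 0 < l ∧ z = l * a + b + l⁻¹ * c},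
      b + 2 * Real.sqrt (a * c) ≤ z := by
    rintro z ⟨l, hl, rfl⟩
    have := amgm hl ha hc
    linarith
  refine le_antisymm ?_ (le_csInf hne hlb)
  rw [Real.sInf_le_iff ⟨_, hlb⟩ hne]
  intro ε hε
  rcases eq_or_lt_of_le ha with ha0 | ha0
  · -- a = 0
    refine ⟨(2 * (c + 1) / ε) * a + b + (2 * (c + 1) / ε)⁻¹ * c, ⟨_, by positivity, rfl⟩, ?_⟩
    rw [← ha0]
    have h0 : Real.sqrt (0 * c) = 0 := by simp
    have hd : (2 * (c + 1) / ε)⁻¹ * c < ε := by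
      rw [inv_div]
      rw [div_mul_eq_mul_div, div_lt_iff₀ (by positivity)]
      nlinarith
    simp only [← ha0, h0]
    linarith
  · rcases eq_or_lt_of_le hc with hc0 | hc0
    · -- c = 0
      refine ⟨(ε / (2 * a)) * a + b + (ε / (2 * a))⁻¹ * c, ⟨_, by positivity, rfl⟩, ?_⟩
      rw [← hc0]
      have h0 : Real.sqrt (a * 0) = 0 := by simp
      have : (ε / (2 * a)) * a = ε / 2 := by field_simp
      rw [this, h0]
      linarith
    · -- a,c > 0
      set l := Real.sqrt (c / a) with hldef
      have hl : 0 < l := Real.sqrt_pos.2 (by positivity)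
      refine ⟨l * a + b + l⁻¹ * c, ⟨l, hl, rfl⟩, ?_⟩
      have hla : l * a = Real.sqrt (a * c) := by
        rw [hldef, show a * c = c / a * a ^ 2 by field_simp,
          Real.sqrt_mul (by positivity), Real.sqrt_sq ha]
      have hll : l * l = c / a := Real.mul_self_sqrt (by positivity)
      have hlc : l⁻¹ * c = Real.sqrt (a * c) := by
        rw [← hla]
        have hlla : l * l * a = c := by rw [hll]; field_simp
        field_simp
        nlinarith [hlla]
      rw [hla, hlc]
      linarith
set_option maxHeartbeats 1000000 in
lemma meat (K : Set (ℝ × ℝ × ℝ)) (hne : K.Nonempty) (hK : IsCompact K)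
    (hconv : Convex ℝ K)
    (hpos : ∀ μ ∈ K, 0 ≤ μ.1 ∧ 0 ≤ μ.2.1 ∧ 0 ≤ μ.2.2)
    {ε : ℝ} (hε : 0 < ε) :
    ∃ l : ℝ, 0 < l ∧ ∀ μ ∈ K, l * μ.2.2 + μ.2.1 + l⁻¹ * μ.1 ≤
      sSup ((fun μ : ℝ × ℝ × ℝ => μ.2.1 + 2 * Real.sqrt (μ.2.2 * μ.1)) '' K) + ε := by
  set g : (ℝ × ℝ × ℝ) → ℝ := fun μ => μ.2.1 + 2 * Real.sqrt (μ.2.2 * μ.1) with hg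
  set S : ℝ := sSup (g '' K) with hS
  have hgc : Continuous g := by
    apply Continuous.add
    · fun_prop
    · exact (continuous_const.mul ((Real.continuous_sqrt).comp
        ((continuous_snd.snd).mul continuous_fst)))
  have hbddg : BddAbove (g '' K) := (hK.image hgc).bddAbove
  have hgS : ∀ μ ∈ K, g μ ≤ S := fun μ h => le_csSup hbddg ⟨μ, h, rfl⟩
  have hbS : ∀ μ ∈ K, μ.2.1 ≤ S := by
    intro μ h
    have h1 := hgS μ h
    have h2 := Real.sqrt_nonneg (μ.2.2 * μ.1)
    simp only [hg] at h1
    linarith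
  obtain ⟨M1, hM1⟩ := (hK.image continuous_fst).bddAbove
  obtain ⟨M2, hM2⟩ := (hK.image (continuous_snd.snd)).bddAbove
  set M : ℝ := max 1 (max M1 M2) with hM
  have hM0 : (1 : ℝ) ≤ M := le_max_left _ _
  have hMpos : (0 : ℝ) < M := by linarith
  have hMc : ∀ μ ∈ K, μ.1 ≤ M := fun μ h =>
    le_trans (hM1 ⟨μ, h, rfl⟩) (le_trans (le_max_left _ _) (le_max_right _ _))
  have hMa : ∀ μ ∈ K, μ.2.2 ≤ M := fun μ h =>
    le_trans (hM2 ⟨μ, h, rfl⟩) (le_trans (le_max_right _ _) (le_max_right _ _))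
  set δ : ℝ := ε / (2 * M) with hδdef
  set Δ : ℝ := δ + 2 * M / ε with hΔdef
  have hδ : 0 < δ := by positivity
  have hδΔ : δ < Δ := by
    have : 0 < 2 * M / ε := by positivity
    simp only [hΔdef]; linarith
  have hδM : δ * M = ε / 2 := by
    simp only [hδdef]; field_simp
  have hMε : ε * (2 * M / ε) = 2 * M := by field_simp
  set y : ℝ := S + ε with hy
  -- membership to conclusion
  have hQF : ∀ l : ℝ, 0 < l → ∀ μ : ℝ × ℝ × ℝ, Qf y l μ ≤ 0 →
      l * μ.2.2 + μ.2.1 + l⁻¹ * μ.1 ≤ S + ε := by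
    intro l hl μ h
    have hinv : l * (l⁻¹ * μ.1) = μ.1 := by field_simp
    refine le_of_mul_le_mul_left ?_ hl
    simp only [Qf] at h
    nlinarith [hinv, h]
  -- nonemptiness of the interval sets
  have hnonempty : ∀ μ ∈ K, ∃ l, l ∈ Set.Icc δ Δ ∧ Qf y l μ ≤ 0 := by
    intro μ hμ
    obtain ⟨hc, hb, ha⟩ := hpos μ hμ
    have hbS' := hbS μ hμ
    have haM := hMa μ hμ
    have hcM := hMc μ hμ
    rcases le_or_gt μ.1 (δ * δ * μ.2.2) with h1 | h1
    · refine ⟨δ, ⟨le_refl δ, hδΔ.le⟩, ?_⟩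
      simp only [Qf, hy]
      nlinarith [mul_le_mul_of_nonneg_left hbS' hδ.le,
        mul_le_mul_of_nonneg_left haM (mul_nonneg hδ.le hδ.le), hδM, hδ.le]
    rcases le_or_gt μ.1 (Δ * Δ * μ.2.2) with h2 | h2
    · -- middle case
      have ha0 : 0 < μ.2.2 := by
        rcases eq_or_lt_of_le ha with h | h
        · exfalso; nlinarith
        · exact h
      set l : ℝ := Real.sqrt (μ.1 / μ.2.2) with hldef
      have hll : l * l = μ.1 / μ.2.2 := Real.mul_self_sqrt (by positivity)
      have hlla : l * l * μ.2.2 = μ.1 := by rw [hll]; field_simp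
      have hl0 : 0 ≤ l := Real.sqrt_nonneg _
      have hΔ0 : (0:ℝ) ≤ Δ := (hδ.trans hδΔ).le
      have hlδ : δ ≤ l := by
        nlinarith [hlla, h1, mul_nonneg hl0 ha, mul_nonneg hδ.le ha]
      have hlΔ : l ≤ Δ := by
        nlinarith [hlla, h2, mul_pos (lt_of_lt_of_le hδ hlδ) ha0, mul_nonneg hΔ0 ha]
      have hsq : Real.sqrt (μ.2.2 * μ.1) = l * μ.2.2 := by
        rw [← hlla, show μ.2.2 * (l * l * μ.2.2) = (l * μ.2.2) ^ 2 from by ring,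
          Real.sqrt_sq (mul_nonneg hl0 ha0.le)]
      have hgμ := hgS μ hμ
      simp only [hg, hsq] at hgμ
      refine ⟨l, ⟨hlδ, hlΔ⟩, ?_⟩
      simp only [Qf, hy]
      nlinarith [mul_le_mul_of_nonneg_left hgμ hl0, hlla, mul_nonneg hl0 hε.le,
        mul_pos (lt_of_lt_of_le hδ hlδ) hε]
    · -- right case
      have hΔpos : 0 < Δ := lt_trans hδ hδΔ
      have hΔ2 : 2 * M / ε ≤ Δ := by simp only [hΔdef]; linarith
      refine ⟨Δ, ⟨hδΔ.le, le_refl Δ⟩, ?_⟩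
      simp only [Qf, hy]
      have hεΔ : 2 * M ≤ ε * Δ := by
        rw [← hMε]; exact mul_le_mul_of_nonneg_left hΔ2 hε.le
      nlinarith [h2, hcM, mul_le_mul_of_nonneg_left hbS' hΔpos.le, hεΔ]
  -- pairwise intersection
  have hQcont : Continuous (fun q : ℝ × (ℝ × ℝ × ℝ) => Qf y q.1 q.2) := Qf_cont y
  have hpair : ∀ μ ∈ K, ∀ ν ∈ K, ∃ l ∈ Set.Icc δ Δ, Qf y l μ ≤ 0 ∧ Qf y l ν ≤ 0 := by
    intro μ hμ ν hν
    by_contra hcon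
    push_neg at hcon
    set p : ℝ → ℝ × ℝ × ℝ := fun t => (1 - t) • μ + t • ν with hp
    have hpcont : Continuous p := by fun_prop
    have hpK : ∀ t ∈ Set.Icc (0:ℝ) 1, p t ∈ K := by
      intro t ht
      exact hconv hμ hν (by linarith [ht.2]) ht.1 (by ring)
    have hp0 : p 0 = μ := by simp [hp]
    have hp1 : p 1 = ν := by simp [hp]
    have hpQ : ∀ l t, Qf y l (p t) = (1 - t) * Qf y l μ + t * Qf y l ν := by
      intro l t; exact Qf_affine y l t μ ν
    have hcover : ∀ t ∈ Set.Icc (0:ℝ) 1, ∀ l, Qf y l (p t) ≤ 0 →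
        (Qf y l μ ≤ 0 ∨ Qf y l ν ≤ 0) := by
      intro t ht l h
      by_contra hno
      push_neg at hno
      rw [hpQ] at h
      rcases eq_or_lt_of_le ht.2 with h1 | h1
      · subst h1; norm_num at h; linarith [hno.2]
      · have e1 : 0 < (1 - t) * Qf y l μ := mul_pos (by linarith) hno.1
        have e2 : 0 ≤ t * Qf y l ν := mul_nonneg ht.1 hno.2.le
        linarith
    -- A and B
    set CA : Set (ℝ × ℝ) := {q | q.1 ∈ Set.Icc (0:ℝ) 1 ∧ q.2 ∈ Set.Icc δ Δ ∧
      Qf y q.2 (p q.1) ≤ 0 ∧ Qf y q.2 μ ≤ 0} with hCA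
    set CB : Set (ℝ × ℝ) := {q | q.1 ∈ Set.Icc (0:ℝ) 1 ∧ q.2 ∈ Set.Icc δ Δ ∧
      Qf y q.2 (p q.1) ≤ 0 ∧ Qf y q.2 ν ≤ 0} with hCB
    have hcl : ∀ ρ : ℝ × ℝ × ℝ, IsClosed {q : ℝ × ℝ | q.1 ∈ Set.Icc (0:ℝ) 1 ∧
        q.2 ∈ Set.Icc δ Δ ∧ Qf y q.2 (p q.1) ≤ 0 ∧ Qf y q.2 ρ ≤ 0} := by
      intro ρ
      have c1 : Continuous (fun q : ℝ × ℝ => Qf y q.2 (p q.1)) :=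
        hQcont.comp (continuous_snd.prodMk (hpcont.comp continuous_fst))
      have c2 : Continuous (fun q : ℝ × ℝ => Qf y q.2 ρ) :=
        hQcont.comp (continuous_snd.prodMk continuous_const)
      exact ((isClosed_Icc.preimage continuous_fst).inter
        ((isClosed_Icc.preimage continuous_snd).inter
          ((isClosed_le c1 continuous_const).inter (isClosed_le c2 continuous_const))))
    have hsub : ∀ ρ : ℝ × ℝ × ℝ, {q : ℝ × ℝ | q.1 ∈ Set.Icc (0:ℝ) 1 ∧
        q.2 ∈ Set.Icc δ Δ ∧ Qf y q.2 (p q.1) ≤ 0 ∧ Qf y q.2 ρ ≤ 0} ⊆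
        (Set.Icc (0:ℝ) 1) ×ˢ (Set.Icc δ Δ) := fun ρ q hq => ⟨hq.1, hq.2.1⟩
    have hCAcomp : IsCompact CA :=
      (isCompact_Icc.prod isCompact_Icc).of_isClosed_subset (hcl μ) (hsub μ)
    have hCBcomp : IsCompact CB :=
      (isCompact_Icc.prod isCompact_Icc).of_isClosed_subset (hcl ν) (hsub ν)
    set A : Set ℝ := Prod.fst '' CA with hA
    set B : Set ℝ := Prod.fst '' CB with hB
    have hAcl : IsClosed A := (hCAcomp.image continuous_fst).isClosed
    have hBcl : IsClosed B := (hCBcomp.image continuous_fst).isClosed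
    have h0A : (0:ℝ) ∈ A := by
      obtain ⟨l, hl, hQ⟩ := hnonempty μ hμ
      exact ⟨(0, l), ⟨⟨le_refl 0, zero_le_one⟩, hl, by rw [hp0]; exact hQ, hQ⟩, rfl⟩
    have h1B : (1:ℝ) ∈ B := by
      obtain ⟨l, hl, hQ⟩ := hnonempty ν hν
      exact ⟨(1, l), ⟨⟨zero_le_one, le_refl 1⟩, hl, by rw [hp1]; exact hQ, hQ⟩, rfl⟩
    have hcov : Set.Icc (0:ℝ) 1 ⊆ A ∪ B := by
      intro t ht
      obtain ⟨l, hl, hQ⟩ := hnonempty (p t) (hpK t ht)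
      rcases hcover t ht l hQ with h | h
      · exact Or.inl ⟨(t, l), ⟨ht, hl, hQ, h⟩, rfl⟩
      · exact Or.inr ⟨(t, l), ⟨ht, hl, hQ, h⟩, rfl⟩
    obtain ⟨t, htI, htA, htB⟩ := isPreconnected_closed_iff.mp isPreconnected_Icc A B
      hAcl hBcl hcov ⟨0, ⟨le_refl 0, zero_le_one⟩, h0A⟩ ⟨1, ⟨zero_le_one, le_refl 1⟩, h1B⟩
    obtain ⟨⟨t1, l1⟩, hq1, hq1t⟩ := htA
    obtain ⟨⟨t2, l2⟩, hq2, hq2t⟩ := htB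
    simp only at hq1t hq2t
    rw [hq1t] at hq1
    rw [hq2t] at hq2
    obtain ⟨_, hl1I, hQ1p, hQ1μ⟩ := hq1
    obtain ⟨_, hl2I, hQ2p, hQ2ν⟩ := hq2
    have hpt2 : 0 ≤ (p t).2.2 := (hpos (p t) (hpK t htI)).2.2
    -- common point on the segment between l1 and l2
    have hfin : ∀ la lb : ℝ, la ≤ lb → la ∈ Set.Icc δ Δ → lb ∈ Set.Icc δ Δ →
        Qf y la (p t) ≤ 0 → Qf y lb (p t) ≤ 0 →
        (∃ x ∈ Set.Icc la lb, Qf y x μ ≤ 0) → (∃ x ∈ Set.Icc la lb, Qf y x ν ≤ 0) →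
        False := by
      intro la lb hab haI hbI hQa hQb hexμ hexν
      have hTcl : IsClosed {x : ℝ | Qf y x μ ≤ 0} := isClosed_le (Qf_cont1 y μ) continuous_const
      have hUcl : IsClosed {x : ℝ | Qf y x ν ≤ 0} := isClosed_le (Qf_cont1 y ν) continuous_const
      have hsub2 : Set.Icc la lb ⊆ {x : ℝ | Qf y x μ ≤ 0} ∪ {x : ℝ | Qf y x ν ≤ 0} := by
        intro x hx
        have hxQ : Qf y x (p t) ≤ 0 := Qf_conv hpt2 hQa hQb hx.1 hx.2
        exact hcover t htI x hxQ
      obtain ⟨x, hxI, hxT, hxU⟩ := isPreconnected_closed_iff.mp isPreconnected_Icc _ _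
        hTcl hUcl hsub2
        (by obtain ⟨x, hx1, hx2⟩ := hexμ; exact ⟨x, hx1, hx2⟩)
        (by obtain ⟨x, hx1, hx2⟩ := hexν; exact ⟨x, hx1, hx2⟩)
      have hxδΔ : x ∈ Set.Icc δ Δ := ⟨le_trans haI.1 hxI.1, le_trans hxI.2 hbI.2⟩
      exact absurd hxU (not_le.mpr (hcon x hxδΔ hxT))
    rcases le_total l1 l2 with hord | hord
    · exact hfin l1 l2 hord hl1I hl2I hQ1p hQ2p ⟨l1, ⟨le_refl l1, hord⟩, hQ1μ⟩
        ⟨l2, ⟨hord, le_refl l2⟩, hQ2ν⟩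
    · exact hfin l2 l1 hord hl2I hl1I hQ2p hQ1p ⟨l1, ⟨hord, le_refl l1⟩, hQ1μ⟩
        ⟨l2, ⟨le_refl l2, hord⟩, hQ2ν⟩
  -- combine: sup of left endpoints works
  set L : (ℝ × ℝ × ℝ) → Set ℝ := fun ρ => {l | l ∈ Set.Icc δ Δ ∧ Qf y l ρ ≤ 0} with hL
  have hLcomp : ∀ ρ, IsCompact (L ρ) := by
    intro ρ
    refine isCompact_Icc.of_isClosed_subset ?_ (fun l hl => hl.1)
    exact (isClosed_Icc).inter (isClosed_le (Qf_cont1 y ρ) continuous_const)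
  have hLne : ∀ ρ ∈ K, (L ρ).Nonempty := by
    intro ρ hρ
    obtain ⟨l, hl, hQ⟩ := hnonempty ρ hρ
    exact ⟨l, hl, hQ⟩
  have hLbb : ∀ ρ, BddBelow (L ρ) := fun ρ => ⟨δ, fun z hz => hz.1.1⟩
  have hLba : ∀ ρ, BddAbove (L ρ) := fun ρ => ⟨Δ, fun z hz => hz.1.2⟩
  set aF : (ℝ × ℝ × ℝ) → ℝ := fun ρ => sInf (L ρ) with haF
  have haL : ∀ ρ ∈ K, aF ρ ∈ L ρ := fun ρ hρ => (hLcomp ρ).sInf_mem (hLne ρ hρ)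
  have hub : BddAbove (aF '' K) := ⟨Δ, by rintro x ⟨ρ, hρ, rfl⟩; exact (haL ρ hρ).1.2⟩
  set A' : ℝ := sSup (aF '' K) with hA'
  obtain ⟨μ0, hμ0⟩ := hne
  have hA'δ : δ ≤ A' := le_trans (haL μ0 hμ0).1.1 (le_csSup hub ⟨μ0, hμ0, rfl⟩)
  have hkey : ∀ ν ∈ K, Qf y A' ν ≤ 0 := by
    intro ν hν
    have hbν : sSup (L ν) ∈ L ν := (hLcomp ν).sSup_mem (hLne ν hν)
    have hub2 : A' ≤ sSup (L ν) := by
      refine csSup_le ⟨aF μ0, ⟨μ0, hμ0, rfl⟩⟩ ?_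
      rintro x ⟨ρ, hρ, rfl⟩
      obtain ⟨l, hlI, hQρ, hQν⟩ := hpair ρ hρ ν hν
      exact le_trans (csInf_le (hLbb ρ) ⟨hlI, hQρ⟩) (le_csSup (hLba ν) ⟨hlI, hQν⟩)
    have hlbν : aF ν ≤ A' := le_csSup hub ⟨ν, hν, rfl⟩
    exact Qf_conv (hpos ν hν).2.2 (haL ν hν).2 hbν.2 hlbν hub2
  exact ⟨A', lt_of_lt_of_le hδ hA'δ, fun μ hμ => hQF A' (lt_of_lt_of_le hδ hA'δ) μ (hkey μ hμ)⟩
/-- For a nonempty compact convex `K ⊆ [0,∞)³` (points written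
`μ = (μ⁻, μ⁰, μ⁺)`),
`inf_{λ>0} sup_{μ∈K} (λμ⁺ + μ⁰ + λ⁻¹μ⁻) = sup_{μ∈K} inf_{λ>0} (λμ⁺ + μ⁰ + λ⁻¹μ⁻)
 = sup_{μ∈K} (μ⁰ + 2√(μ⁺μ⁻))`. -/
theorem stmt1 (K : Set (ℝ × ℝ × ℝ)) (hne : K.Nonempty) (hK : IsCompact K)
    (hconv : Convex ℝ K)
    (hpos : ∀ μ ∈ K, 0 ≤ μ.1 ∧ 0 ≤ μ.2.1 ∧ 0 ≤ μ.2.2) :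
    sInf {y : ℝ | ∃ l : ℝ, 0 < l ∧
        y = sSup ((fun μ : ℝ × ℝ × ℝ => l * μ.2.2 + μ.2.1 + l⁻¹ * μ.1) '' K)}
      = sSup ((fun μ : ℝ × ℝ × ℝ =>
          sInf {z : ℝ | ∃ l : ℝ, 0 < l ∧ z = l * μ.2.2 + μ.2.1 + l⁻¹ * μ.1}) '' K) ∧
    sInf {y : ℝ | ∃ l : ℝ, 0 < l ∧
        y = sSup ((fun μ : ℝ × ℝ × ℝ => l * μ.2.2 + μ.2.1 + l⁻¹ * μ.1) '' K)}
      = sSup ((fun μ : ℝ × ℝ × ℝ => μ.2.1 + 2 * Real.sqrt (μ.2.2 * μ.1)) '' K) := by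
  have himg : (fun μ : ℝ × ℝ × ℝ =>
      sInf {z : ℝ | ∃ l : ℝ, 0 < l ∧ z = l * μ.2.2 + μ.2.1 + l⁻¹ * μ.1}) '' K
      = (fun μ : ℝ × ℝ × ℝ => μ.2.1 + 2 * Real.sqrt (μ.2.2 * μ.1)) '' K := by
    apply Set.image_congr
    intro μ hμ
    obtain ⟨hc, hb, ha⟩ := hpos μ hμ
    exact innerInf ha hb hc
  have key : sInf {y : ℝ | ∃ l : ℝ, 0 < l ∧
      y = sSup ((fun μ : ℝ × ℝ × ℝ => l * μ.2.2 + μ.2.1 + l⁻¹ * μ.1) '' K)}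
      = sSup ((fun μ : ℝ × ℝ × ℝ => μ.2.1 + 2 * Real.sqrt (μ.2.2 * μ.1)) '' K) := by
    set g : (ℝ × ℝ × ℝ) → ℝ := fun μ => μ.2.1 + 2 * Real.sqrt (μ.2.2 * μ.1) with hg
    have hgc : Continuous g := by
      apply Continuous.add
      · fun_prop
      · exact (continuous_const.mul ((Real.continuous_sqrt).comp
          ((continuous_snd.snd).mul continuous_fst)))
    have hbddg : BddAbove (g '' K) := (hK.image hgc).bddAbove
    have hTne : {y : ℝ | ∃ l : ℝ, 0 < l ∧
        y = sSup ((fun μ : ℝ × ℝ × ℝ => l * μ.2.2 + μ.2.1 + l⁻¹ * μ.1) '' K)}.Nonempty :=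
      ⟨_, 1, one_pos, rfl⟩
    have hmemge : ∀ y ∈ {y : ℝ | ∃ l : ℝ, 0 < l ∧
        y = sSup ((fun μ : ℝ × ℝ × ℝ => l * μ.2.2 + μ.2.1 + l⁻¹ * μ.1) '' K)},
        sSup (g '' K) ≤ y := by
      rintro y ⟨l, hl, rfl⟩
      refine csSup_le (hne.image g) ?_
      rintro x ⟨μ, hμ, rfl⟩
      obtain ⟨hc, hb, ha⟩ := hpos μ hμ
      have hF : g μ ≤ l * μ.2.2 + μ.2.1 + l⁻¹ * μ.1 := by
        have := amgm hl ha hc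
        simp only [hg]
        linarith
      have hbdd : BddAbove ((fun μ : ℝ × ℝ × ℝ => l * μ.2.2 + μ.2.1 + l⁻¹ * μ.1) '' K) :=
        (hK.image (by fun_prop)).bddAbove
      exact le_trans hF (le_csSup hbdd ⟨μ, hμ, rfl⟩)
    refine le_antisymm ?_ (le_csInf hTne hmemge)
    refine le_of_forall_pos_le_add ?_
    intro ε hε
    obtain ⟨l, hl, hkey⟩ := meat K hne hK hconv hpos hε
    have hy : sSup ((fun μ : ℝ × ℝ × ℝ => l * μ.2.2 + μ.2.1 + l⁻¹ * μ.1) '' K)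
        ≤ sSup (g '' K) + ε := by
      refine csSup_le (hne.image _) ?_
      rintro x ⟨μ, hμ, rfl⟩
      exact hkey μ hμ
    exact le_trans (csInf_le ⟨sSup (g '' K), hmemge⟩ ⟨l, hl, rfl⟩) hy
  exact ⟨by rw [himg]; exact key, key⟩
end

section
/- Let K be a nonempty compact convex subset of ℝ³ whose points μ = (μ⁻, μ⁰, μ⁺) satisfy μ⁻ > 0, μ⁰ ≥ 0, μ⁺ > 0. Then the following are equivalent: (i) there exists λ > 0 such that λ⁻¹·μ⁻ + μ⁰ + λ·μ⁺ ≤ 1 for every μ ∈ K; (ii) μ⁰ + 2·√(μ⁺·μ⁻) ≤ 1 for every μ ∈ K. -/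
/-- The objective function `g(λ, μ) = λ⁻¹μ⁻ + μ⁰ + λμ⁺`. -/
noncomputable def gfK (l : ℝ) (μ : ℝ × ℝ × ℝ) : ℝ := l⁻¹ * μ.1 + μ.2.1 + l * μ.2.2

/-- The set of good values of `λ` for a single `μ`. -/
def AsetK (μ : ℝ × ℝ × ℝ) : Set ℝ := {l : ℝ | μ.1 ≤ l ∧ gfK l μ ≤ 1}

/-- AM–GM: `2√(ab) ≤ a + b` for nonnegative reals. -/
lemma my_amgm (a b : ℝ) (ha : 0 ≤ a) (hb : 0 ≤ b) : 2 * Real.sqrt (a * b) ≤ a + b := by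
  rw [Real.sqrt_mul ha]
  nlinarith [sq_nonneg (Real.sqrt a - Real.sqrt b), Real.sq_sqrt ha, Real.sq_sqrt hb,
    Real.sqrt_nonneg a, Real.sqrt_nonneg b]

/-- Value of the objective at the optimal `λ = √(m/p)`. -/
lemma my_sqrt_helper (m p : ℝ) (hm : 0 < m) (hp : 0 < p) :
    (Real.sqrt (m / p))⁻¹ * m + Real.sqrt (m / p) * p = 2 * Real.sqrt (p * m) := by
  have h1 : Real.sqrt (m / p) = Real.sqrt m / Real.sqrt p := Real.sqrt_div hm.le p
  have h2 : Real.sqrt (p * m) = Real.sqrt p * Real.sqrt m := Real.sqrt_mul hp.le m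
  have hsm : 0 < Real.sqrt m := Real.sqrt_pos.2 hm
  have hsp : 0 < Real.sqrt p := Real.sqrt_pos.2 hp
  have hm' : Real.sqrt m * Real.sqrt m = m := Real.mul_self_sqrt hm.le
  have hp' : Real.sqrt p * Real.sqrt p = p := Real.mul_self_sqrt hp.le
  rw [h1, h2]
  field_simp
  nlinarith [hm', hp']

lemma my_opt (μ : ℝ × ℝ × ℝ) (hm : 0 < μ.1) (hp : 0 < μ.2.2) :
    0 < Real.sqrt (μ.1 / μ.2.2) ∧
      gfK (Real.sqrt (μ.1 / μ.2.2)) μ = μ.2.1 + 2 * Real.sqrt (μ.2.2 * μ.1) := by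
  refine ⟨Real.sqrt_pos.2 (div_pos hm hp), ?_⟩
  have := my_sqrt_helper μ.1 μ.2.2 hm hp
  unfold gfK
  linarith

/-- Sublevel interval lemma: the sublevel set of the convex function
`l ↦ l⁻¹m + z + lp` is an interval. -/
lemma my_quad (m z p a b l : ℝ) (hp : 0 < p) (ha : 0 < a)
    (hal : a ≤ l) (hlb : l ≤ b)
    (hqa : a⁻¹ * m + z + a * p ≤ 1) (hqb : b⁻¹ * m + z + b * p ≤ 1) :
    l⁻¹ * m + z + l * p ≤ 1 := by
  have hl : 0 < l := lt_of_lt_of_le ha hal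
  have hb : 0 < b := lt_of_lt_of_le hl hlb
  have qa : m + z * a + a ^ 2 * p ≤ a := by
    have h := mul_le_mul_of_nonneg_left hqa ha.le
    have : a * (a⁻¹ * m + z + a * p) = m + z * a + a ^ 2 * p := by
      field_simp
    rw [this] at h; linarith
  have qb : m + z * b + b ^ 2 * p ≤ b := by
    have h := mul_le_mul_of_nonneg_left hqb hb.le
    have : b * (b⁻¹ * m + z + b * p) = m + z * b + b ^ 2 * p := by
      field_simp
    rw [this] at h; linarith
  have key : m + z * l + l ^ 2 * p ≤ l := by
    rcases eq_or_lt_of_le (hal.trans hlb) with hab | hab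
    · have : a = l := le_antisymm hal (hlb.trans hab.ge)
      subst this; exact qa
    · nlinarith [mul_nonneg (mul_nonneg (sub_nonneg.2 hal) (sub_nonneg.2 hlb))
          (sub_nonneg.2 (hal.trans hlb)),
        mul_nonneg (sub_nonneg.2 hlb) (by linarith : (0:ℝ) ≤ a - (m + z * a + a ^ 2 * p)),
        mul_nonneg (sub_nonneg.2 hal) (by linarith : (0:ℝ) ≤ b - (m + z * b + b ^ 2 * p)),
        mul_nonneg (mul_nonneg (mul_nonneg (sub_nonneg.2 hal) (sub_nonneg.2 hlb))
          (sub_nonneg.2 (hal.trans hlb))) hp.le]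
  have : l⁻¹ * m + z + l * p = (m + z * l + l ^ 2 * p) / l := by field_simp
  rw [this, div_le_one hl]; exact key

lemma my_mem_Aset {μ : ℝ × ℝ × ℝ} {l : ℝ} (hm : 0 < μ.1) (hz : 0 ≤ μ.2.1)
    (hp : 0 < μ.2.2) (hl : 0 < l) (hg : gfK l μ ≤ 1) : l ∈ AsetK μ := by
  refine ⟨?_, hg⟩
  have h1 : l⁻¹ * μ.1 ≤ 1 := by
    have := mul_pos hl hp
    unfold gfK at hg
    linarith
  have h2 := mul_le_mul_of_nonneg_left h1 hl.le
  have h3 : l * (l⁻¹ * μ.1) = μ.1 := by field_simp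
  rw [h3, mul_one] at h2
  exact h2

lemma my_Aset_sub {μ : ℝ × ℝ × ℝ} (hm : 0 < μ.1) (hz : 0 ≤ μ.2.1) (hp : 0 < μ.2.2) :
    AsetK μ ⊆ Set.Icc μ.1 (μ.2.2)⁻¹ := by
  rintro l ⟨h1, h2⟩
  refine ⟨h1, ?_⟩
  have hl : 0 < l := lt_of_lt_of_le hm h1
  have hinv : 0 < l⁻¹ * μ.1 := mul_pos (inv_pos.2 hl) hm
  have hlp : l * μ.2.2 ≤ 1 := by unfold gfK at h2; linarith
  rw [← one_div]
  exact (le_div_iff₀ hp).2 hlp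

lemma my_Aset_closed {μ : ℝ × ℝ × ℝ} (hm : 0 < μ.1) : IsClosed (AsetK μ) := by
  have : AsetK μ = Set.Ici μ.1 ∩ (fun l => gfK l μ) ⁻¹' Set.Iic 1 := by
    ext l; simp [AsetK, Set.mem_Ici, Set.mem_Iic, and_comm]
  rw [this]
  have hc : ContinuousOn (fun l => gfK l μ) (Set.Ici μ.1) := by
    unfold gfK
    have hne : ∀ l ∈ Set.Ici μ.1, l ≠ 0 := fun l hl => (lt_of_lt_of_le hm hl).ne'
    exact (((continuousOn_id.inv₀ hne).mul continuousOn_const).add continuousOn_const).add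
      (continuousOn_id.mul continuousOn_const)
  exact hc.preimage_isClosed_of_isClosed isClosed_Ici isClosed_Iic

/-- For any two points of `K` there is a common good `λ`
(a minimax / connectedness argument using convexity of `K`). -/
lemma my_pair (K : Set (ℝ × ℝ × ℝ)) (hconv : Convex ℝ K)
    (hpos : ∀ μ ∈ K, 0 < μ.1 ∧ 0 ≤ μ.2.1 ∧ 0 < μ.2.2)
    (hii : ∀ μ ∈ K, μ.2.1 + 2 * Real.sqrt (μ.2.2 * μ.1) ≤ 1)
    {μ ν : ℝ × ℝ × ℝ} (hμ : μ ∈ K) (hν : ν ∈ K) :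
    ∃ l : ℝ, 0 < l ∧ gfK l μ ≤ 1 ∧ gfK l ν ≤ 1 := by
  set σ : ℝ → ℝ × ℝ × ℝ := fun t => (1 - t) • μ + t • ν with hσdef
  have hσK : ∀ t ∈ Set.Icc (0:ℝ) 1, σ t ∈ K := fun t ht =>
    hconv hμ hν (by linarith [ht.2]) ht.1 (by ring)
  have hσ1 : ∀ t, (σ t).1 = (1 - t) * μ.1 + t * ν.1 := fun t => by
    simp [hσdef]
  have hσz : ∀ t, (σ t).2.1 = (1 - t) * μ.2.1 + t * ν.2.1 := fun t => by
    simp [hσdef]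
  have hσp : ∀ t, (σ t).2.2 = (1 - t) * μ.2.2 + t * ν.2.2 := fun t => by
    simp [hσdef]
  set h : ℝ → ℝ := fun t => Real.sqrt ((σ t).1 / (σ t).2.2) with hhdef
  have hhpos : ∀ t ∈ Set.Icc (0:ℝ) 1, 0 < h t := fun t ht => by
    obtain ⟨hm, hz, hp⟩ := hpos _ (hσK t ht)
    exact Real.sqrt_pos.2 (div_pos hm hp)
  have hopt : ∀ t ∈ Set.Icc (0:ℝ) 1, gfK (h t) (σ t) ≤ 1 := fun t ht => by
    obtain ⟨hm, hz, hp⟩ := hpos _ (hσK t ht)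
    rw [(my_opt (σ t) hm hp).2]
    exact hii _ (hσK t ht)
  have hσcont : Continuous σ := by
    apply Continuous.add
    · exact (continuous_const.sub continuous_id).smul continuous_const
    · exact continuous_id.smul continuous_const
  have hcont1 : ContinuousOn (fun t => (σ t).1) (Set.Icc (0:ℝ) 1) :=
    (continuous_fst.comp hσcont).continuousOn
  have hcontp : ContinuousOn (fun t => (σ t).2.2) (Set.Icc (0:ℝ) 1) :=
    (continuous_snd.comp (continuous_snd.comp hσcont)).continuousOn
  have hpne : ∀ t ∈ Set.Icc (0:ℝ) 1, (σ t).2.2 ≠ 0 := fun t ht =>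
    (hpos _ (hσK t ht)).2.2.ne'
  have hhcont : ContinuousOn h (Set.Icc (0:ℝ) 1) :=
    Real.continuous_sqrt.comp_continuousOn (hcont1.div hcontp hpne)
  have hhne : ∀ t ∈ Set.Icc (0:ℝ) 1, h t ≠ 0 := fun t ht => (hhpos t ht).ne'
  have hGcont : ∀ ρ : ℝ × ℝ × ℝ, ContinuousOn (fun t => gfK (h t) ρ) (Set.Icc (0:ℝ) 1) := by
    intro ρ
    unfold gfK
    exact (((hhcont.inv₀ hhne).mul continuousOn_const).add continuousOn_const).add
      (hhcont.mul continuousOn_const)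
  set C1 : Set ℝ := Set.Icc (0:ℝ) 1 ∩ (fun t => gfK (h t) μ) ⁻¹' Set.Iic 1 with hC1
  set C2 : Set ℝ := Set.Icc (0:ℝ) 1 ∩ (fun t => gfK (h t) ν) ⁻¹' Set.Iic 1 with hC2
  have hC1closed : IsClosed C1 :=
    (hGcont μ).preimage_isClosed_of_isClosed isClosed_Icc isClosed_Iic
  have hC2closed : IsClosed C2 :=
    (hGcont ν).preimage_isClosed_of_isClosed isClosed_Icc isClosed_Iic
  have hlin : ∀ t, gfK (h t) (σ t) = (1 - t) * gfK (h t) μ + t * gfK (h t) ν := by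
    intro t
    simp only [gfK, hσ1 t, hσz t, hσp t]
    ring
  have hcover : Set.Icc (0:ℝ) 1 ⊆ C1 ∪ C2 := by
    intro t ht
    by_contra hcon
    simp only [C1, C2, Set.mem_union, Set.mem_inter_iff, Set.mem_preimage,
      Set.mem_Iic, not_or, not_and, not_le] at hcon
    have hg1 : 1 < gfK (h t) μ := hcon.1 ht
    have hg2 : 1 < gfK (h t) ν := hcon.2 ht
    have hgσ : gfK (h t) (σ t) ≤ 1 := hopt t ht
    have hA : 0 ≤ (1 - t) * (gfK (h t) μ - 1) :=
      mul_nonneg (by linarith [ht.2]) (by linarith)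
    have hB : 0 ≤ t * (gfK (h t) ν - 1) := mul_nonneg ht.1 (by linarith)
    have hS : (1 - t) * (gfK (h t) μ - 1) + t * (gfK (h t) ν - 1) ≤ 0 := by
      have he : (1 - t) * (gfK (h t) μ - 1) + t * (gfK (h t) ν - 1)
          = (1 - t) * gfK (h t) μ + t * gfK (h t) ν - 1 := by ring
      rw [he, ← hlin t]; linarith
    have e1 : (1 - t) * (gfK (h t) μ - 1) = 0 := le_antisymm (by linarith) hA
    have e2 : t * (gfK (h t) ν - 1) = 0 := le_antisymm (by linarith) hB
    have t1 : 1 - t = 0 := by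
      rcases mul_eq_zero.mp e1 with hcase | hcase
      · exact hcase
      · linarith
    have t0 : t = 0 := by
      rcases mul_eq_zero.mp e2 with hcase | hcase
      · exact hcase
      · linarith
    linarith
  have h0mem : (0:ℝ) ∈ Set.Icc (0:ℝ) 1 := by constructor <;> norm_num
  have h1mem : (1:ℝ) ∈ Set.Icc (0:ℝ) 1 := by constructor <;> norm_num
  have hσ0 : σ 0 = μ := by simp [hσdef]
  have hσ1' : σ 1 = ν := by simp [hσdef]
  have hne1 : (Set.Icc (0:ℝ) 1 ∩ C1).Nonempty := by
    refine ⟨0, h0mem, h0mem, ?_⟩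
    have := hopt 0 h0mem
    rw [hσ0] at this
    exact this
  have hne2 : (Set.Icc (0:ℝ) 1 ∩ C2).Nonempty := by
    refine ⟨1, h1mem, h1mem, ?_⟩
    have := hopt 1 h1mem
    rw [hσ1'] at this
    exact this
  obtain ⟨t₀, ht₀I, ht₀1, ht₀2⟩ :=
    isPreconnected_closed_iff.mp isPreconnected_Icc C1 C2 hC1closed hC2closed hcover hne1 hne2
  exact ⟨h t₀, hhpos t₀ ht₀I, ht₀1.2, ht₀2.2⟩

/-- For a nonempty compact convex `K ⊆ ℝ³` whose points
`μ = (μ⁻, μ⁰, μ⁺)` satisfy `μ⁻ > 0`, `μ⁰ ≥ 0`, `μ⁺ > 0`, the following are equivalent: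
(i) there exists `λ > 0` with `λ⁻¹μ⁻ + μ⁰ + λμ⁺ ≤ 1` for all `μ ∈ K`;
(ii) `μ⁰ + 2√(μ⁺μ⁻) ≤ 1` for all `μ ∈ K`. -/
theorem stmt2 (K : Set (ℝ × ℝ × ℝ)) (hne : K.Nonempty) (hK : IsCompact K)
    (hconv : Convex ℝ K)
    (hpos : ∀ μ ∈ K, 0 < μ.1 ∧ 0 ≤ μ.2.1 ∧ 0 < μ.2.2) :
    (∃ l : ℝ, 0 < l ∧ ∀ μ ∈ K, l⁻¹ * μ.1 + μ.2.1 + l * μ.2.2 ≤ 1) ↔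
    (∀ μ ∈ K, μ.2.1 + 2 * Real.sqrt (μ.2.2 * μ.1) ≤ 1) := by
  constructor
  · rintro ⟨l, hl, h⟩ μ hμ
    obtain ⟨hm, hz, hp⟩ := hpos μ hμ
    have hg := h μ hμ
    have ham := my_amgm (l⁻¹ * μ.1) (l * μ.2.2)
      (mul_nonneg (inv_nonneg.2 hl.le) hm.le) (mul_nonneg hl.le hp.le)
    have heq : l⁻¹ * μ.1 * (l * μ.2.2) = μ.2.2 * μ.1 := by
      field_simp
    rw [heq] at ham
    linarith
  · intro hii
    obtain ⟨ν₀, hν₀⟩ := hne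
    -- the good sets are nonempty closed intervals
    have hmemA : ∀ μ ∈ K, sInf (AsetK μ) ∈ AsetK μ ∧ sSup (AsetK μ) ∈ AsetK μ := by
      intro μ hμ
      obtain ⟨hm, hz, hp⟩ := hpos μ hμ
      have hnonempty : (AsetK μ).Nonempty := by
        obtain ⟨hψpos, hψval⟩ := my_opt μ hm hp
        refine ⟨Real.sqrt (μ.1 / μ.2.2), my_mem_Aset hm hz hp hψpos ?_⟩
        rw [hψval]; exact hii μ hμ
      have hsub := my_Aset_sub hm hz hp
      have hbddB : BddBelow (AsetK μ) := ⟨μ.1, fun l hl => hl.1⟩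
      have hbddA : BddAbove (AsetK μ) := ⟨(μ.2.2)⁻¹, fun l hl => (hsub hl).2⟩
      exact ⟨(my_Aset_closed hm).csInf_mem hnonempty hbddB,
        (my_Aset_closed hm).csSup_mem hnonempty hbddA⟩
    -- pairwise comparison: inf of one interval ≤ sup of another
    have hpairAB : ∀ μ ∈ K, ∀ ν ∈ K, sInf (AsetK μ) ≤ sSup (AsetK ν) := by
      intro μ hμ ν hν
      obtain ⟨hm, hz, hp⟩ := hpos μ hμ
      obtain ⟨hm', hz', hp'⟩ := hpos ν hν
      obtain ⟨l, hl, h1, h2⟩ := my_pair K hconv hpos hii hμ hν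
      have hlA : l ∈ AsetK μ := my_mem_Aset hm hz hp hl h1
      have hlB : l ∈ AsetK ν := my_mem_Aset hm' hz' hp' hl h2
      calc sInf (AsetK μ) ≤ l := csInf_le ⟨μ.1, fun x hx => hx.1⟩ hlA
        _ ≤ sSup (AsetK ν) :=
          le_csSup ⟨(ν.2.2)⁻¹, fun x hx => ((my_Aset_sub hm' hz' hp') hx).2⟩ hlB
    have hbdd : BddAbove ((fun μ => sInf (AsetK μ)) '' K) := by
      refine ⟨sSup (AsetK ν₀), ?_⟩
      rintro _ ⟨μ, hμ, rfl⟩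
      exact hpairAB μ hμ ν₀ hν₀
    set L := sSup ((fun μ => sInf (AsetK μ)) '' K) with hLdef
    have hL1 : ∀ μ ∈ K, sInf (AsetK μ) ≤ L := fun μ hμ => le_csSup hbdd ⟨μ, hμ, rfl⟩
    have hL2 : ∀ μ ∈ K, L ≤ sSup (AsetK μ) := fun μ hμ =>
      csSup_le ⟨sInf (AsetK ν₀), ⟨ν₀, hν₀, rfl⟩⟩
        (by rintro _ ⟨ν, hν, rfl⟩; exact hpairAB ν hν μ hμ)
    refine ⟨L, ?_, ?_⟩
    · have h1 := hL1 ν₀ hν₀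
      have h2 := (hmemA ν₀ hν₀).1.1
      have h3 := (hpos ν₀ hν₀).1
      linarith
    · intro μ hμ
      obtain ⟨hm, hz, hp⟩ := hpos μ hμ
      obtain ⟨hA, hB⟩ := hmemA μ hμ
      exact my_quad μ.1 μ.2.1 μ.2.2 (sInf (AsetK μ)) (sSup (AsetK μ)) L hp
        (lt_of_lt_of_le hm hA.1) (hL1 μ hμ) (hL2 μ hμ) hA.2 hB.2
end

section
/- Let μ⁻, μ⁰, μ⁺, λ be real numbers with μ⁺ ≠ 0 and λ ≠ 0, and let B(λ) be the 2×2 matrix with rows (1, −λ) and (1, 0). Then B(λ) is invertible (its determinant equals λ), and A(μ⁻,μ⁰,μ⁺) = λ · B(λ)⁻¹ · A^{(λ)}(μ⁻,μ⁰,μ⁺) · B(λ). -/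
/-- The matrix `A(μ⁻,μ⁰,μ⁺)` from the paper: first row `((1−μ⁰)/μ⁺, −μ⁻/μ⁺)`,
second row `(1, 0)`. -/
noncomputable def Amat (μm μ0 μp : ℝ) : Matrix (Fin 2) (Fin 2) ℝ :=
  !![(1 - μ0) / μp, -μm / μp; 1, 0]

/-- The matrix `A^{(λ)}(μ⁻,μ⁰,μ⁺)` from the paper: first row
`(μ⁻/(λ²μ⁺), (1−μ⁰−λ⁻¹μ⁻−λμ⁺)/(λμ⁺))`, second row
`(μ⁻/(λ²μ⁺), 1+(1−μ⁰−λ⁻¹μ⁻−λμ⁺)/(λμ⁺))`. -/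
noncomputable def Alam (μm μ0 μp l : ℝ) : Matrix (Fin 2) (Fin 2) ℝ :=
  !![μm / (l ^ 2 * μp), (1 - μ0 - l⁻¹ * μm - l * μp) / (l * μp);
     μm / (l ^ 2 * μp), 1 + (1 - μ0 - l⁻¹ * μm - l * μp) / (l * μp)]

/-- The change-of-basis matrix `B(λ)` with rows `(1, −λ)` and `(1, 0)`. -/
noncomputable def Bmat (l : ℝ) : Matrix (Fin 2) (Fin 2) ℝ :=
  !![1, -l; 1, 0]

/-- For `μ⁺ ≠ 0` and `λ ≠ 0`, the matrix `B(λ)` is invertible with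
determinant `λ`, and `A(μ⁻,μ⁰,μ⁺) = λ · B(λ)⁻¹ · A^{(λ)}(μ⁻,μ⁰,μ⁺) · B(λ)`. -/
theorem stmt6 (μm μ0 μp l : ℝ) (hp : μp ≠ 0) (hl : l ≠ 0) :
    (Bmat l).det = l ∧ IsUnit (Bmat l) ∧
    Amat μm μ0 μp = l • ((Bmat l)⁻¹ * Alam μm μ0 μp l * Bmat l) := by
  have hdet : (Bmat l).det = l := by simp [Bmat, Matrix.det_fin_two_of]
  refine ⟨hdet, ?_, ?_⟩
  · rw [Matrix.isUnit_iff_isUnit_det, hdet]; exact hl.isUnit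
  · have hinv : (Bmat l)⁻¹ = !![0, l; -1, 1].map (· * l⁻¹) := by
      rw [Matrix.inv_def, hdet, Matrix.adjugate_fin_two]
      simp [Bmat]
      ext i j
      fin_cases i <;> fin_cases j <;> simp [mul_comm]
    rw [hinv]
    ext i j
    fin_cases i <;> fin_cases j <;>
      simp [Amat, Alam, Bmat, Matrix.mul_apply, Fin.sum_univ_two] <;>
      field_simp <;> ring
end

section
/- Let (c_k)_{k≥1} be an i.i.d. sequence of strictly positive random variables with E[|ln c₁|] < ∞, and for each k let A_k be the 2×2 matrix with rows (c_k, 0) and (c_k, 1). Then almost surely (1/n)·ln‖A_n·A_{n−1}⋯A_1‖ → max(0, E[ln c₁]) as n → ∞, where ‖·‖ is the operator norm. -/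
open MeasureTheory ProbabilityTheory Filter Topology Matrix
open scoped Matrix.Norms.L2Operator

/-- Ordered product `A_n ⋯ A_1` of a sequence of matrices (empty product is `1`). -/
noncomputable def prodDesc (M : ℕ → Matrix (Fin 2) (Fin 2) ℝ) :
    ℕ → Matrix (Fin 2) (Fin 2) ℝ
  | 0 => 1
  | n + 1 => M (n + 1) * prodDesc M n

private lemma euclid_norm (v : EuclideanSpace ℝ (Fin 2)) :
    ‖v‖ = Real.sqrt (v 0 ^ 2 + v 1 ^ 2) := by
  rw [EuclideanSpace.norm_eq]
  simp [Fin.sum_univ_two, Real.norm_eq_abs, sq_abs]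

private lemma aux_lower (a b : ℝ) (hb : 0 ≤ b) :
    (b + 1) / 2 ≤ ‖(!![a, 0; b, 1] : Matrix (Fin 2) (Fin 2) ℝ)‖ := by
  set A : Matrix (Fin 2) (Fin 2) ℝ := !![a, 0; b, 1] with hA
  have key : ∀ x : Fin 2 → ℝ,
      ‖(EuclideanSpace.equiv (Fin 2) ℝ).symm (A.mulVec x)‖ ≤
        ‖A‖ * ‖(WithLp.equiv 2 (Fin 2 → ℝ)).symm x‖ := fun x =>
    Matrix.l2_opNorm_mulVec A ((WithLp.equiv 2 (Fin 2 → ℝ)).symm x)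
  have h0 := key ![1, 0]
  have h1 := key ![0, 1]
  rw [euclid_norm, euclid_norm] at h0
  rw [euclid_norm, euclid_norm] at h1
  simp [hA, Matrix.mulVec, dotProduct, Fin.sum_univ_two] at h0 h1
  have hb' : b ≤ Real.sqrt (a ^ 2 + b ^ 2) := by
    have := Real.sqrt_le_sqrt (show b ^ 2 ≤ a ^ 2 + b ^ 2 by nlinarith)
    rwa [Real.sqrt_sq hb] at this
  rw [hA]
  linarith

private lemma aux_upper (a b : ℝ) (ha : 0 ≤ a) (hb : 0 ≤ b) :
    ‖(!![a, 0; b, 1] : Matrix (Fin 2) (Fin 2) ℝ)‖ ≤ a + b + 1 := by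
  rw [Matrix.l2_opNorm_def]
  apply ContinuousLinearMap.opNorm_le_bound _ (by positivity)
  intro x
  have hx : (LinearEquiv.trans Matrix.toEuclideanLin LinearMap.toContinuousLinearMap
        (!![a, 0; b, 1] : Matrix (Fin 2) (Fin 2) ℝ)) x
      = (WithLp.equiv 2 (Fin 2 → ℝ)).symm
          ((!![a, 0; b, 1] : Matrix (Fin 2) (Fin 2) ℝ) *ᵥ (WithLp.equiv 2 (Fin 2 → ℝ)) x) := rfl
  rw [hx, euclid_norm, euclid_norm x]
  have e0 : ((!![a, 0; b, 1] : Matrix (Fin 2) (Fin 2) ℝ) *ᵥ (WithLp.equiv 2 (Fin 2 → ℝ)) x) 0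
      = a * x 0 := by
    simp [Matrix.mulVec, dotProduct, Fin.sum_univ_two]
  have e1 : ((!![a, 0; b, 1] : Matrix (Fin 2) (Fin 2) ℝ) *ᵥ (WithLp.equiv 2 (Fin 2 → ℝ)) x) 1
      = b * x 0 + x 1 := by
    simp [Matrix.mulVec, dotProduct, Fin.sum_univ_two]
  simp only [WithLp.equiv_symm_apply, WithLp.ofLp_toLp]
  rw [e0, e1]
  have h2 : (a + b + 1) * Real.sqrt (x 0 ^ 2 + x 1 ^ 2)
      = Real.sqrt ((a + b + 1) ^ 2 * (x 0 ^ 2 + x 1 ^ 2)) := by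
    rw [Real.sqrt_mul (sq_nonneg _), Real.sqrt_sq (by positivity)]
  rw [h2]
  apply Real.sqrt_le_sqrt
  nlinarith [mul_nonneg hb (sq_nonneg (x 0 - x 1)), mul_nonneg ha (sq_nonneg (x 0)),
    mul_nonneg (mul_nonneg ha hb) (sq_nonneg (x 0)), sq_nonneg (x 0), sq_nonneg (x 1),
    mul_nonneg ha (sq_nonneg (x 1)), mul_nonneg hb (sq_nonneg (x 1)),
    mul_nonneg (mul_nonneg ha hb) (sq_nonneg (x 1))]

private lemma aux_log_div : Tendsto (fun n : ℕ => Real.log ((n : ℝ) + 1) / n) atTop (𝓝 0) := by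
  have h1 : (fun n : ℕ => Real.log ((n : ℝ) + 1)) =o[atTop] (fun n : ℕ => (n : ℝ) + 1) :=
    Real.isLittleO_log_id_atTop.comp_tendsto
      (tendsto_atTop_add_const_right _ 1 tendsto_natCast_atTop_atTop)
  have h2 : (fun n : ℕ => (n : ℝ) + 1) =O[atTop] (fun n : ℕ => (n : ℝ)) := by
    rw [Asymptotics.isBigO_iff]
    refine ⟨2, ?_⟩
    filter_upwards [eventually_ge_atTop 1] with n hn
    have : (1 : ℝ) ≤ n := by exact_mod_cast hn
    rw [Real.norm_eq_abs, Real.norm_eq_abs,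
      abs_of_nonneg (by linarith), abs_of_nonneg (by linarith)]
    linarith
  exact (h1.trans_isBigO h2).tendsto_div_nhds_zero

private lemma lemA (L : ℕ → ℝ) (hL0 : L 0 = 0) {m : ℝ}
    (h : Tendsto (fun n => L n / n) atTop (𝓝 m)) :
    Tendsto (fun n => ((Finset.range (n + 1)).sup' Finset.nonempty_range_add_one L) / n)
      atTop (𝓝 (max m 0)) := by
  rw [tendsto_order]
  constructor
  · intro a ha
    have hmax : Tendsto (fun n => max (L n / n) 0) atTop (𝓝 (max m 0)) :=
      h.max tendsto_const_nhds
    filter_upwards [(tendsto_order.1 hmax).1 a ha, eventually_ge_atTop 1] with n hn hn1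
    refine lt_of_lt_of_le hn ?_
    have npos : (0 : ℝ) < n := by exact_mod_cast hn1
    have heq : max (L n / (n : ℝ)) 0 = max (L n) 0 / n := by
      rw [← max_div_div_right npos.le, zero_div]
    rw [heq]
    have hL0' : (0:ℝ) ≤ (Finset.range (n + 1)).sup' Finset.nonempty_range_add_one L := by
      have := Finset.le_sup' L (Finset.mem_range.2 (Nat.succ_pos n))
      rwa [hL0] at this
    have hLn : L n ≤ (Finset.range (n + 1)).sup' Finset.nonempty_range_add_one L :=
      Finset.le_sup' L (Finset.self_mem_range_succ n)
    have : max (L n) 0 ≤ (Finset.range (n + 1)).sup' Finset.nonempty_range_add_one L :=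
      max_le hLn hL0'
    exact div_le_div_of_nonneg_right this npos.le
  · intro a ha
    have ha0 : 0 < a := lt_of_le_of_lt (le_max_right m 0) ha
    set b := (max m 0 + a) / 2 with hbdef
    have hmax0 : (0:ℝ) ≤ max m 0 := le_max_right m 0
    have hb0 : 0 < b := by rw [hbdef]; positivity
    have hba : b < a := by rw [hbdef]; linarith
    have hmb : m < b := by
      have := le_max_left m 0
      rw [hbdef]; linarith
    obtain ⟨N₁, hN₁⟩ := eventually_atTop.1 (h.eventually (eventually_lt_nhds hmb))
    set K := max N₁ 1 with hK
    have hKne : (Finset.range K).Nonempty :=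
      ⟨0, Finset.mem_range.2 (lt_of_lt_of_le one_pos (le_max_right _ 1))⟩
    set C := (Finset.range K).sup' hKne L with hC
    have hna : Tendsto (fun n : ℕ => (n : ℝ) * a) atTop atTop :=
      tendsto_natCast_atTop_atTop.atTop_mul_const ha0
    filter_upwards [eventually_ge_atTop 1, hna.eventually_gt_atTop C] with n hn1 hnC
    have npos : (0 : ℝ) < n := by exact_mod_cast hn1
    rw [div_lt_iff₀ npos]
    have hsup : (Finset.range (n + 1)).sup' Finset.nonempty_range_add_one L
        ≤ max C ((n : ℝ) * b) := by
      apply Finset.sup'_le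
      intro k hk
      by_cases hkK : k < K
      · exact le_trans (Finset.le_sup' L (Finset.mem_range.2 hkK)) (le_max_left _ _)
      · push_neg at hkK
        have hk1 : 1 ≤ k := le_trans (le_max_right N₁ 1) hkK
        have hkpos : (0 : ℝ) < k := by exact_mod_cast hk1
        have hd := hN₁ k (le_trans (le_max_left N₁ 1) hkK)
        rw [div_lt_iff₀ hkpos] at hd
        have hkn : (k : ℝ) ≤ n := by
          exact_mod_cast Nat.lt_succ_iff.1 (Finset.mem_range.1 hk)
        have : L k ≤ (n : ℝ) * b := by
          calc L k ≤ b * k := hd.le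
          _ ≤ b * n := by nlinarith
          _ = (n : ℝ) * b := mul_comm _ _
        exact le_trans this (le_max_right _ _)
    refine lt_of_le_of_lt hsup (max_lt ?_ ?_)
    · calc C < (n : ℝ) * a := hnC
      _ = a * n := mul_comm _ _
    · calc (n : ℝ) * b < (n : ℝ) * a := by nlinarith
      _ = a * n := mul_comm _ _

/-- For an i.i.d. sequence `(c_k)_{k≥1}` of strictly positive random
variables with `E[|ln c₁|] < ∞`, and `A_k` the matrix with rows `(c_k, 0)` and
`(c_k, 1)`, almost surely `(1/n)·ln‖A_n⋯A_1‖ → max(0, E[ln c₁])` (operator norm). -/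
theorem stmt9 {Ω : Type*} [MeasurableSpace Ω] (P : Measure Ω) [IsProbabilityMeasure P]
    (c : ℕ → Ω → ℝ)
    (hmeas : ∀ k, Measurable (c k))
    (hpos : ∀ k, ∀ᵐ ω ∂P, 0 < c k ω)
    (hindep : iIndepFun c P)
    (hident : ∀ k, 1 ≤ k → Measure.map (c k) P = Measure.map (c 1) P)
    (hint : Integrable (fun ω => |Real.log (c 1 ω)|) P) :
    ∀ᵐ ω ∂P,
      Tendsto
        (fun n : ℕ =>
          (n : ℝ)⁻¹ * Real.log ‖prodDesc (fun k => !![c k ω, 0; c k ω, 1]) n‖)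
        atTop (nhds (max 0 (∫ ω, Real.log (c 1 ω) ∂P))) := by
  classical
  set X : ℕ → Ω → ℝ := fun i ω => Real.log (c (i + 1) ω) with hX
  have hXmeas : ∀ i, Measurable (X i) := fun i => Real.measurable_log.comp (hmeas (i + 1))
  have hX0int : Integrable (X 0) P := by
    refine hint.mono (hXmeas 0).aestronglyMeasurable ?_
    filter_upwards with ω
    simp [hX, Real.norm_eq_abs, abs_abs]
  have hXindep : Pairwise (Function.onFun (IndepFun · · P) X) := by
    intro i j hij
    exact (hindep.indepFun (show i + 1 ≠ j + 1 by omega)).comp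
      Real.measurable_log Real.measurable_log
  have hXident : ∀ i, IdentDistrib (X i) (X 0) P P := by
    intro i
    have hcid : IdentDistrib (c (i + 1)) (c 1) P P :=
      ⟨(hmeas (i + 1)).aemeasurable, (hmeas 1).aemeasurable, hident (i + 1) (by omega)⟩
    exact hcid.comp Real.measurable_log
  have hslln := ProbabilityTheory.strong_law_ae_real X hX0int hXindep hXident
  have hposall : ∀ᵐ ω ∂P, ∀ k, 0 < c k ω := ae_all_iff.2 hpos
  filter_upwards [hslln, hposall] with ω hsl hc
  set m := ∫ ω', Real.log (c 1 ω') ∂P with hmdef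
  have hslm : Tendsto (fun n : ℕ => (∑ i ∈ Finset.range n, X i ω) / n) atTop (𝓝 m) := hsl
  -- deterministic setup
  set π : ℕ → ℝ := fun n => ∏ i ∈ Finset.range n, c (i + 1) ω with hπ
  have hπpos : ∀ n, 0 < π n := fun n => Finset.prod_pos fun i _ => hc (i + 1)
  set L : ℕ → ℝ := fun n => ∑ i ∈ Finset.range n, Real.log (c (i + 1) ω) with hL
  have hLlog : ∀ n, L n = Real.log (π n) := by
    intro n
    rw [hL, hπ]
    exact (Real.log_prod fun i _ => (hc (i + 1)).ne').symm
  set s : ℕ → ℝ := fun n => ∑ i ∈ Finset.range n, π (i + 1) with hs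
  set T : ℕ → ℝ := fun n => ∑ k ∈ Finset.range (n + 1), π k with hT
  have hTs : ∀ n, T n = s n + 1 := by
    intro n
    show (∑ k ∈ Finset.range (n + 1), π k) = (∑ i ∈ Finset.range n, π (i + 1)) + 1
    rw [Finset.sum_range_succ']
    simp [hπ]
  have hTpos : ∀ n, 0 < T n := fun n =>
    Finset.sum_pos (fun k _ => hπpos k) Finset.nonempty_range_add_one
  have hsnn : ∀ n, 0 ≤ s n := fun n =>
    Finset.sum_nonneg fun k _ => (hπpos (k + 1)).le
  have hπT : ∀ n, π n ≤ T n := fun n =>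
    Finset.single_le_sum (fun k _ => (hπpos k).le) (Finset.self_mem_range_succ n)
  -- product formula
  have hP : ∀ n, prodDesc (fun k => !![c k ω, 0; c k ω, 1]) n = !![π n, 0; s n, 1] := by
    intro n
    induction n with
    | zero =>
      show (1 : Matrix (Fin 2) (Fin 2) ℝ) = _
      rw [Matrix.one_fin_two]
      congr 1 <;> simp [hπ, hs]
    | succ n ih =>
      show !![c (n + 1) ω, 0; c (n + 1) ω, 1] * prodDesc _ n = _
      rw [ih, Matrix.mul_fin_two]
      have hπs : π (n + 1) = π n * c (n + 1) ω := by rw [hπ]; exact Finset.prod_range_succ _ _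
      have hss : s (n + 1) = s n + π (n + 1) := by rw [hs]; exact Finset.sum_range_succ _ _
      ext i j
      fin_cases i <;> fin_cases j <;> simp [hπs, hss] <;> ring
  -- norm bounds
  have hnormlow : ∀ n,
      T n / 2 ≤ ‖prodDesc (fun k => !![c k ω, 0; c k ω, 1]) n‖ := by
    intro n
    rw [hP n, hTs n]
    exact aux_lower (π n) (s n) (hsnn n)
  have hnormpos : ∀ n, 0 < ‖prodDesc (fun k => !![c k ω, 0; c k ω, 1]) n‖ := fun n =>
    lt_of_lt_of_le (half_pos (hTpos n)) (hnormlow n)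
  have hnormup : ∀ n,
      ‖prodDesc (fun k => !![c k ω, 0; c k ω, 1]) n‖ ≤ 2 * T n := by
    intro n
    rw [hP n]
    refine le_trans (aux_upper (π n) (s n) (hπpos n).le (hsnn n)) ?_
    have h1 := hπT n
    have h2 := hTs n
    linarith
  -- logarithmic bounds
  have hlogup : ∀ n, Real.log ‖prodDesc (fun k => !![c k ω, 0; c k ω, 1]) n‖
      ≤ Real.log (T n) + Real.log 2 := by
    intro n
    have := Real.log_le_log (hnormpos n) (hnormup n)
    rwa [Real.log_mul two_ne_zero (hTpos n).ne', add_comm] at this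
  have hloglow : ∀ n, Real.log (T n) - Real.log 2
      ≤ Real.log ‖prodDesc (fun k => !![c k ω, 0; c k ω, 1]) n‖ := by
    intro n
    have h1 : Real.log (T n / 2) ≤ Real.log ‖prodDesc (fun k => !![c k ω, 0; c k ω, 1]) n‖ :=
      Real.log_le_log (half_pos (hTpos n)) (hnormlow n)
    rwa [Real.log_div (hTpos n).ne' two_ne_zero] at h1
  -- sup bounds
  set S : ℕ → ℝ := fun n => (Finset.range (n + 1)).sup' Finset.nonempty_range_add_one L with hS
  have hSleT : ∀ n, S n ≤ Real.log (T n) := by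
    intro n
    obtain ⟨k, hk, hke⟩ :=
      Finset.exists_mem_eq_sup' (Finset.nonempty_range_add_one (n := n)) L
    have hSn : S n = L k := hke
    rw [hSn, hLlog k]
    exact Real.log_le_log (hπpos k) (Finset.single_le_sum (fun j _ => (hπpos j).le) hk)
  have hTleS : ∀ n, Real.log (T n) ≤ Real.log ((n : ℝ) + 1) + S n := by
    intro n
    have hsum : T n ≤ ((n : ℝ) + 1) * Real.exp (S n) := by
      rw [hT]
      calc (∑ k ∈ Finset.range (n + 1), π k)
          ≤ ∑ _k ∈ Finset.range (n + 1), Real.exp (S n) := by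
            apply Finset.sum_le_sum
            intro k hk
            have h1 : L k ≤ S n := Finset.le_sup' L hk
            calc π k = Real.exp (L k) := by rw [hLlog k, Real.exp_log (hπpos k)]
            _ ≤ Real.exp (S n) := Real.exp_le_exp.2 h1
        _ = ((n : ℝ) + 1) * Real.exp (S n) := by
            rw [Finset.sum_const, Finset.card_range, nsmul_eq_mul]
            push_cast; ring
    have := Real.log_le_log (hTpos n) hsum
    rwa [Real.log_mul (by positivity) (Real.exp_ne_zero _), Real.log_exp] at this
  -- limits
  have hLdiv : Tendsto (fun n => L n / n) atTop (𝓝 m) := hslm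
  have hSdiv : Tendsto (fun n => S n / n) atTop (𝓝 (max m 0)) := by
    have := lemA L (by simp [hL]) hLdiv
    exact this
  have hupseq : Tendsto (fun n : ℕ => Real.log ((n : ℝ) + 1) / n + S n / n) atTop
      (𝓝 (max m 0)) := by
    have := aux_log_div.add hSdiv
    rwa [zero_add] at this
  have hlogT : Tendsto (fun n => Real.log (T n) / n) atTop (𝓝 (max m 0)) := by
    refine tendsto_of_tendsto_of_tendsto_of_le_of_le' hSdiv hupseq ?_ ?_
    · filter_upwards [eventually_ge_atTop 1] with n hn
      have npos : (0 : ℝ) < n := by exact_mod_cast hn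
      exact div_le_div_of_nonneg_right (hSleT n) npos.le
    · filter_upwards [eventually_ge_atTop 1] with n hn
      have npos : (0 : ℝ) < n := by exact_mod_cast hn
      rw [← add_div]
      exact div_le_div_of_nonneg_right (hTleS n) npos.le
  have hlow2 : Tendsto (fun n : ℕ => Real.log (T n) / n - Real.log 2 / n) atTop
      (𝓝 (max m 0)) := by
    have := hlogT.sub (tendsto_const_div_atTop_nhds_zero_nat (Real.log 2))
    rwa [sub_zero] at this
  have hup2 : Tendsto (fun n : ℕ => Real.log (T n) / n + Real.log 2 / n) atTop
      (𝓝 (max m 0)) := by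
    have := hlogT.add (tendsto_const_div_atTop_nhds_zero_nat (Real.log 2))
    rwa [add_zero] at this
  have hfin : Tendsto
      (fun n : ℕ => Real.log ‖prodDesc (fun k => !![c k ω, 0; c k ω, 1]) n‖ / n) atTop
      (𝓝 (max m 0)) := by
    refine tendsto_of_tendsto_of_tendsto_of_le_of_le' hlow2 hup2 ?_ ?_
    · filter_upwards [eventually_ge_atTop 1] with n hn
      have npos : (0 : ℝ) < n := by exact_mod_cast hn
      rw [div_sub_div_same]
      exact div_le_div_of_nonneg_right (hloglow n) npos.le
    · filter_upwards [eventually_ge_atTop 1] with n hn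
      have npos : (0 : ℝ) < n := by exact_mod_cast hn
      rw [← add_div]
      exact div_le_div_of_nonneg_right (hlogup n) npos.le
  rw [max_comm] at hfin
  simpa only [div_eq_inv_mul] using hfin
end
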